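/- For m > 5/2, the extended Hall operator satisfies ‖H̃(φ,ψ)‖_{V_{s,m}'} ≤ c ‖φ‖_{𝓗} ‖ψ‖_{𝓥} for all φ ∈ 𝓗 = H × H, ψ ∈ 𝓥 = V × V, and any s ≥ 0, where H̃((u¹,B¹),(u²,B²)) acts by ⟨H̃(φ,ψ), (v¹,v²)⟩ = h(B¹, B², v²). -/

import Mathlib

open MeasureTheory Filter
open scoped Topology FourierTransform

noncomputable section

abbrev Rd3 : Type := EuclideanSpace ℝ (Fin 3)
abbrev VF : Type := Rd3 → Fin 3 → ℝ

def pd (i : Fin 3) (f : Rd3 → ℝ) (x : Rd3) : ℝ :=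
  fderiv ℝ f x (EuclideanSpace.single i 1)

def divFree (u : VF) : Prop := ∀ x : Rd3, (∑ i : Fin 3, pd i (fun y => u y i) x) = 0

def dot3 (a b : Fin 3 → ℝ) : ℝ := ∑ j : Fin 3, a j * b j

def cross3 (a b : Fin 3 → ℝ) : Fin 3 → ℝ :=
  ![a 1 * b 2 - a 2 * b 1, a 2 * b 0 - a 0 * b 2, a 0 * b 1 - a 1 * b 0]

def curl3 (u : VF) (x : Rd3) : Fin 3 → ℝ :=
  ![pd 1 (fun y => u y 2) x - pd 2 (fun y => u y 1) x,
    pd 2 (fun y => u y 0) x - pd 0 (fun y => u y 2) x,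
    pd 0 (fun y => u y 1) x - pd 1 (fun y => u y 0) x]

def bForm (u w v : VF) : ℝ :=
  ∫ x : Rd3, ∑ i : Fin 3, ∑ j : Fin 3, u x i * pd i (fun y => w y j) x * v x j

def hallForm (u w v : VF) : ℝ :=
  - ∫ x : Rd3, dot3 (cross3 (u x) (curl3 w x)) (curl3 v x)

def hsSq (s : ℝ) (u : VF) : ℝ :=
  ∫ ξ : Rd3, (1 + ‖ξ‖ ^ 2) ^ s * ∑ j : Fin 3, ‖𝓕 (fun x : Rd3 => ((u x j : ℝ) : ℂ)) ξ‖ ^ 2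

def hsNorm (s : ℝ) (u : VF) : ℝ := Real.sqrt (hsSq s u)

def smoothCpt (u : VF) : Prop := ContDiff ℝ (⊤ : ℕ∞) u ∧ HasCompactSupport u


/-! ### Auxiliary machinery -/

open Complex Real
open scoped RealInnerProductSpace

section Helpers

set_option maxHeartbeats 1000000

/-- complexification of a real-valued function -/
def cplx (f : Rd3 → ℝ) : Rd3 → ℂ := fun x => (f x : ℂ)

/-- smooth compactly supported function as a Schwartz map -/
def toSch (f : Rd3 → ℂ) (h1 : ContDiff ℝ (⊤ : ℕ∞) f) (h2 : HasCompactSupport f) :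
    SchwartzMap Rd3 ℂ where
  toFun := f
  smooth' := h1
  decay' := by
    intro k n
    have hcont : Continuous fun x => ‖x‖ ^ k * ‖iteratedFDeriv ℝ n f x‖ :=
      (continuous_norm.pow k).mul
        ((h1.continuous_iteratedFDeriv (by exact_mod_cast le_top)).norm)
    have hsupp : HasCompactSupport fun x => ‖x‖ ^ k * ‖iteratedFDeriv ℝ n f x‖ := by
      apply HasCompactSupport.mul_left
      exact (h2.iteratedFDeriv n).norm
    obtain ⟨C, hC⟩ := hcont.bounded_above_of_compact_support hsupp
    exact ⟨C, fun x => le_trans (le_abs_self _) (hC x)⟩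

lemma conj_integrable {φ : Rd3 → ℂ} (h : Integrable φ) :
    Integrable (fun ξ => (starRingEnd ℂ) (φ ξ)) :=
  (Complex.conjLIE.toContinuousLinearEquiv.toContinuousLinearMap : ℂ →L[ℝ] ℂ).integrable_comp h

lemma fourier_conj (F : Rd3 → ℂ) :
    𝓕 (fun ξ => (starRingEnd ℂ) (F ξ)) = fun x => (starRingEnd ℂ) (𝓕⁻ F x) := by
  ext x
  rw [Real.fourier_eq, Real.fourierInv_eq, ← integral_conj]
  refine integral_congr_ae (Filter.Eventually.of_forall fun ξ => ?_)
  show 𝐞 (-⟪ξ, x⟫) • (starRingEnd ℂ) (F ξ) = (starRingEnd ℂ) (𝐞 ⟪ξ, x⟫ • F ξ)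
  rw [Circle.smul_def, Circle.smul_def, smul_eq_mul, smul_eq_mul, map_mul, Real.fourierChar_apply,
    Real.fourierChar_apply, ← Complex.exp_conj]
  congr 1
  simp only [map_mul, Complex.conj_ofReal, Complex.conj_I]
  push_cast
  ring

lemma parseval (φ : Rd3 → ℂ) (hc : Continuous φ) (hi : Integrable φ)
    (hFi : Integrable (𝓕 φ)) :
    ∫ ξ : Rd3, ‖𝓕 φ ξ‖ ^ 2 = ∫ x : Rd3, ‖φ x‖ ^ 2 := by
  have flipEq : (innerₗ Rd3).flip = innerₗ Rd3 := by
    apply LinearMap.ext; intro x; apply LinearMap.ext; intro y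
    rw [LinearMap.flip_apply]
    exact real_inner_comm x y
  have mult := VectorFourier.integral_bilin_fourierIntegral_eq_flip
    (L := innerₗ Rd3) (f := φ) (g := fun ξ => (starRingEnd ℂ) (𝓕 φ ξ))
    (ContinuousLinearMap.mul ℂ ℂ) Real.continuous_fourierChar continuous_inner hi
    (conj_integrable hFi)
  rw [flipEq] at mult
  have key : ∫ ξ : Rd3, 𝓕 φ ξ * (starRingEnd ℂ) (𝓕 φ ξ)
      = ∫ x : Rd3, φ x * (starRingEnd ℂ) (φ x) := by
    have h1 : ∀ x : Rd3, VectorFourier.fourierIntegral 𝐞 volume (innerₗ Rd3)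
        (fun ξ => (starRingEnd ℂ) (𝓕 φ ξ)) x = (starRingEnd ℂ) (φ x) := by
      intro x
      have := congrFun (fourier_conj (𝓕 φ)) x
      rw [show VectorFourier.fourierIntegral 𝐞 volume (innerₗ Rd3)
        (fun ξ => (starRingEnd ℂ) (𝓕 φ ξ)) x = 𝓕 (fun ξ => (starRingEnd ℂ) (𝓕 φ ξ)) x from rfl,
        this, hi.fourierInv_fourier_eq hFi hc.continuousAt]
    have mult' : ∫ ξ : Rd3, 𝓕 φ ξ * (starRingEnd ℂ) (𝓕 φ ξ)
        = ∫ x : Rd3, φ x * VectorFourier.fourierIntegral 𝐞 volume (innerₗ Rd3)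
            (fun ξ => (starRingEnd ℂ) (𝓕 φ ξ)) x := mult
    rw [mult']
    simp only [h1]
  simp only [RCLike.mul_conj, ← RCLike.ofReal_pow] at key
  rw [integral_ofReal, integral_ofReal] at key
  exact_mod_cast key

variable {f : Rd3 → ℝ}

lemma cplx_contDiff (h1 : ContDiff ℝ (⊤ : ℕ∞) f) : ContDiff ℝ (⊤ : ℕ∞) (cplx f) :=
  Complex.ofRealCLM.contDiff.comp h1

lemma cplx_hcs (h2 : HasCompactSupport f) : HasCompactSupport (cplx f) :=
  h2.comp_left (g := fun r : ℝ => (r : ℂ)) rfl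

lemma cplx_integrable (h1 : ContDiff ℝ (⊤ : ℕ∞) f) (h2 : HasCompactSupport f) :
    Integrable (cplx f) :=
  ((cplx_contDiff h1).continuous).integrable_of_hasCompactSupport (cplx_hcs h2)

lemma pd_contDiff (h1 : ContDiff ℝ (⊤ : ℕ∞) f) (i : Fin 3) : ContDiff ℝ (⊤ : ℕ∞) (pd i f) := by
  have : ContDiff ℝ (⊤ : ℕ∞) (fderiv ℝ f) := h1.fderiv_right (by exact_mod_cast le_top)
  exact this.clm_apply contDiff_const

lemma pd_hcs (h2 : HasCompactSupport f) (i : Fin 3) : HasCompactSupport (pd i f) := by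
  have := h2.fderiv (𝕜 := ℝ)
  exact this.comp_left (g := fun T : Rd3 →L[ℝ] ℝ => T (EuclideanSpace.single i 1)) rfl

lemma fderiv_cplx (h1 : ContDiff ℝ (⊤ : ℕ∞) f) (x : Rd3) :
    fderiv ℝ (cplx f) x = Complex.ofRealCLM.comp (fderiv ℝ f x) :=
  (Complex.ofRealCLM.hasFDerivAt.comp x
    ((h1.differentiable (by simp)) x).hasFDerivAt).fderiv

lemma fourier_pd (h1 : ContDiff ℝ (⊤ : ℕ∞) f) (h2 : HasCompactSupport f) (i : Fin 3) (ξ : Rd3) :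
    𝓕 (cplx (pd i f)) ξ = (2 * π * I * (ξ i)) * 𝓕 (cplx f) ξ := by
  have hint : Integrable (cplx f) := cplx_integrable h1 h2
  have hdiff : Differentiable ℝ (cplx f) :=
    (cplx_contDiff h1).differentiable (by simp)
  have hder_cd : ContDiff ℝ (⊤ : ℕ∞) (fderiv ℝ (cplx f)) :=
    (cplx_contDiff h1).fderiv_right (by exact_mod_cast le_top)
  have hder_cont : Continuous (fderiv ℝ (cplx f)) := hder_cd.continuous
  have hder_hcs : HasCompactSupport (fderiv ℝ (cplx f)) := (cplx_hcs h2).fderiv (𝕜 := ℝ)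
  have hder_int : Integrable (fderiv ℝ (cplx f)) :=
    hder_cont.integrable_of_hasCompactSupport hder_hcs
  have key := Real.fourier_fderiv hint hdiff hder_int
  have e1 : 𝓕 (fderiv ℝ (cplx f)) ξ (EuclideanSpace.single i 1)
      = 𝓕 (cplx (pd i f)) ξ := by
    rw [Real.fourier_eq]
    rw [ContinuousLinearMap.integral_apply]
    · rw [Real.fourier_eq]
      congr 1; ext x
      rw [Circle.smul_def, ContinuousLinearMap.smul_apply, fderiv_cplx h1]
      rfl
    · exact (VectorFourier.fourierIntegral_convergent_iff (e := 𝐞) (μ := volume)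
        (L := innerₗ Rd3) (f := fderiv ℝ (cplx f))
        Real.continuous_fourierChar continuous_inner ξ).2 hder_int
  rw [← e1, key]
  rw [VectorFourier.fourierSMulRight_apply]
  simp only [ContinuousLinearMap.neg_apply, innerSL_apply_apply, map_one, one_mul,
    Complex.real_smul, smul_eq_mul]
  have hin : (innerSL ℝ ξ) (EuclideanSpace.single i (1:ℝ)) = ξ i := by
    simp [EuclideanSpace.inner_single_right]
  simp only [ContinuousLinearMap.neg_apply, hin]
  push_cast
  ring

lemma csInt {f g : Rd3 → ℝ} (hf0 : ∀ x, 0 ≤ f x) (hg0 : ∀ x, 0 ≤ g x)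
    (hfm : AEStronglyMeasurable f (volume : Measure Rd3)) (hgm : AEStronglyMeasurable g volume)
    (hf2 : Integrable (fun x => f x ^ 2)) (hg2 : Integrable (fun x => g x ^ 2)) :
    ∫ x : Rd3, f x * g x ≤ Real.sqrt (∫ x : Rd3, f x ^ 2) * Real.sqrt (∫ x : Rd3, g x ^ 2) := by
  have hpq : Real.HolderConjugate 2 2 := Real.HolderConjugate.two_two
  have hfL : MemLp f (ENNReal.ofReal 2) volume := by
    rw [show ENNReal.ofReal 2 = 2 by norm_num]
    exact (memLp_two_iff_integrable_sq hfm).2 hf2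
  have hgL : MemLp g (ENNReal.ofReal 2) volume := by
    rw [show ENNReal.ofReal 2 = 2 by norm_num]
    exact (memLp_two_iff_integrable_sq hgm).2 hg2
  have h := integral_mul_le_Lp_mul_Lq_of_nonneg hpq
    (Filter.Eventually.of_forall hf0) (Filter.Eventually.of_forall hg0) hfL hgL
  calc ∫ x : Rd3, f x * g x
      ≤ (∫ x : Rd3, f x ^ (2:ℝ)) ^ ((1:ℝ)/2) * (∫ x : Rd3, g x ^ (2:ℝ)) ^ ((1:ℝ)/2) := h
  _ = Real.sqrt (∫ x : Rd3, f x ^ 2) * Real.sqrt (∫ x : Rd3, g x ^ 2) := by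
      rw [← Real.sqrt_eq_rpow, ← Real.sqrt_eq_rpow]
      norm_num [Real.rpow_two]

/-- decay of a Schwartz function -/
lemma schwartz_decay (φ : SchwartzMap Rd3 ℂ) (k : ℕ) :
    ∃ C : ℝ, 0 ≤ C ∧ ∀ ξ : Rd3, ‖φ ξ‖ ≤ C * (1 + ‖ξ‖) ^ (-(k:ℝ)) := by
  obtain ⟨C, hC⟩ : ∃ C : ℝ, ∀ ξ : Rd3, (1 + ‖ξ‖) ^ k * ‖φ ξ‖ ≤ C :=
    ⟨_, fun ξ => by
      simpa [norm_iteratedFDeriv_zero] using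
        SchwartzMap.one_add_le_sup_seminorm_apply (𝕜 := ℝ) (m := (k, 0)) le_rfl le_rfl φ ξ⟩
  have hC0 : 0 ≤ C := le_trans (by positivity) (hC 0)
  refine ⟨C, hC0, fun ξ => ?_⟩
  have hpos : (0:ℝ) < (1 + ‖ξ‖) ^ (k:ℝ) := by positivity
  rw [Real.rpow_neg (by positivity), ← div_eq_mul_inv, le_div_iff₀ hpos]
  calc ‖φ ξ‖ * (1 + ‖ξ‖) ^ (k:ℝ) = (1 + ‖ξ‖) ^ k * ‖φ ξ‖ := by
        rw [mul_comm, Real.rpow_natCast]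
  _ ≤ C := hC ξ

lemma weight_cont (t : ℝ) : Continuous (fun ξ : Rd3 => (1 + ‖ξ‖ ^ 2) ^ t) := by
  apply Continuous.rpow_const
  · fun_prop
  · intro ξ; left; positivity

lemma weight_sq (t : ℝ) (ξ : Rd3) :
    ((1 + ‖ξ‖ ^ 2) ^ t) ^ 2 = (1 + ‖ξ‖ ^ 2) ^ (2 * t) := by
  have hpos : (0:ℝ) < 1 + ‖ξ‖ ^ 2 := by positivity
  rw [sq, ← Real.rpow_add hpos]
  ring_nf

lemma integrable_weight (φ : SchwartzMap Rd3 ℂ) (t : ℝ) (p : ℕ) (hp : 1 ≤ p) :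
    Integrable (fun ξ : Rd3 => (1 + ‖ξ‖ ^ 2) ^ t * ‖φ ξ‖ ^ p) := by
  set n : ℕ := ⌈t⌉₊ with hn
  obtain ⟨C, hC0, hC⟩ := schwartz_decay φ (2 * n + 4)
  have key : ∀ ξ : Rd3, (1 + ‖ξ‖ ^ 2) ^ t * ‖φ ξ‖ ^ p ≤ C ^ p * (1 + ‖ξ‖) ^ (-(4:ℝ)) := by
    intro ξ
    have hb1 : (1:ℝ) ≤ 1 + ‖ξ‖ ^ 2 := le_add_of_nonneg_right (sq_nonneg _)
    have hb2 : (1:ℝ) ≤ 1 + ‖ξ‖ := le_add_of_nonneg_right (norm_nonneg _)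
    have h1 : (1 + ‖ξ‖ ^ 2) ^ t ≤ (1 + ‖ξ‖) ^ ((2 * n : ℕ) : ℝ) := by
      calc (1 + ‖ξ‖ ^ 2) ^ t ≤ (1 + ‖ξ‖ ^ 2) ^ ((n : ℕ) : ℝ) :=
            Real.rpow_le_rpow_of_exponent_le hb1 (Nat.le_ceil t)
      _ = (1 + ‖ξ‖ ^ 2) ^ (n : ℕ) := Real.rpow_natCast _ n
      _ ≤ ((1 + ‖ξ‖) ^ 2) ^ (n : ℕ) := by
            apply pow_le_pow_left₀ (by positivity)
            nlinarith [norm_nonneg ξ]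
      _ = (1 + ‖ξ‖) ^ (2 * n : ℕ) := by rw [← pow_mul]
      _ = (1 + ‖ξ‖) ^ ((2 * n : ℕ) : ℝ) := (Real.rpow_natCast _ _).symm
    have h2 : ‖φ ξ‖ ^ p ≤ C ^ p * (1 + ‖ξ‖) ^ (-((2 * n + 4 : ℕ) : ℝ)) := by
      calc ‖φ ξ‖ ^ p ≤ (C * (1 + ‖ξ‖) ^ (-((2 * n + 4 : ℕ) : ℝ))) ^ p :=
            pow_le_pow_left₀ (norm_nonneg _) (hC ξ) p
      _ = C ^ p * ((1 + ‖ξ‖) ^ (-((2 * n + 4 : ℕ) : ℝ))) ^ p := mul_pow _ _ _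
      _ = C ^ p * (1 + ‖ξ‖) ^ (-((2 * n + 4 : ℕ) : ℝ) * p) := by
            rw [← Real.rpow_natCast ((1 + ‖ξ‖) ^ (-((2 * n + 4 : ℕ) : ℝ))) p,
              ← Real.rpow_mul (by positivity)]
      _ ≤ C ^ p * (1 + ‖ξ‖) ^ (-((2 * n + 4 : ℕ) : ℝ)) := by
            apply mul_le_mul_of_nonneg_left _ (by positivity)
            apply Real.rpow_le_rpow_of_exponent_le hb2
            have : (1:ℝ) ≤ (p:ℝ) := by exact_mod_cast hp
            nlinarith [Nat.cast_nonneg (α := ℝ) (2 * n + 4)]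
    calc (1 + ‖ξ‖ ^ 2) ^ t * ‖φ ξ‖ ^ p
        ≤ (1 + ‖ξ‖) ^ ((2 * n : ℕ) : ℝ) * (C ^ p * (1 + ‖ξ‖) ^ (-((2 * n + 4 : ℕ) : ℝ))) :=
          mul_le_mul h1 h2 (by positivity) (by positivity)
    _ = C ^ p * (1 + ‖ξ‖) ^ (((2 * n : ℕ) : ℝ) + -((2 * n + 4 : ℕ) : ℝ)) := by
          rw [Real.rpow_add (by positivity)]; ring
    _ = C ^ p * (1 + ‖ξ‖) ^ (-(4:ℝ)) := by norm_num
  have hint : Integrable (fun ξ : Rd3 => C ^ p * (1 + ‖ξ‖) ^ (-(4:ℝ))) := by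
    apply Integrable.const_mul
    apply integrable_one_add_norm (E := Rd3)
    simp [finrank_euclideanSpace]
    norm_num
  refine hint.mono' ?_ (Filter.Eventually.of_forall fun ξ => ?_)
  · exact ((weight_cont t).mul (φ.continuous.norm.pow p)).aestronglyMeasurable
  · rw [Real.norm_of_nonneg (by positivity)]
    exact key ξ

/-- the Schwartz map given by the Fourier transform of `cplx f` -/
def FTs (h1 : ContDiff ℝ (⊤ : ℕ∞) f) (h2 : HasCompactSupport f) : SchwartzMap Rd3 ℂ :=
  SchwartzMap.fourierTransformCLM ℂ (toSch (cplx f) (cplx_contDiff h1) (cplx_hcs h2))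

lemma FTs_eq (h1 : ContDiff ℝ (⊤ : ℕ∞) f) (h2 : HasCompactSupport f) :
    (FTs h1 h2 : Rd3 → ℂ) = 𝓕 (cplx f) := rfl

lemma fourier_integrable (h1 : ContDiff ℝ (⊤ : ℕ∞) f) (h2 : HasCompactSupport f) :
    Integrable (𝓕 (cplx f)) := by
  have := (FTs h1 h2).integrable (μ := volume)
  rwa [FTs_eq] at this

lemma fourier_cont (h1 : ContDiff ℝ (⊤ : ℕ∞) f) (h2 : HasCompactSupport f) :
    Continuous (𝓕 (cplx f)) := by
  have := (FTs h1 h2).continuous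
  rwa [FTs_eq] at this

lemma fourier_weight_integrable (h1 : ContDiff ℝ (⊤ : ℕ∞) f) (h2 : HasCompactSupport f)
    (t : ℝ) (p : ℕ) (hp : 1 ≤ p) :
    Integrable (fun ξ : Rd3 => (1 + ‖ξ‖ ^ 2) ^ t * ‖𝓕 (cplx f) ξ‖ ^ p) := by
  have := integrable_weight (FTs h1 h2) t p hp
  rwa [FTs_eq] at this

lemma plancherel_sq (h1 : ContDiff ℝ (⊤ : ℕ∞) f) (h2 : HasCompactSupport f) :
    ∫ x : Rd3, (f x) ^ 2 = ∫ ξ : Rd3, ‖𝓕 (cplx f) ξ‖ ^ 2 := by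
  rw [parseval (cplx f) (cplx_contDiff h1).continuous (cplx_integrable h1 h2)
    (fourier_integrable h1 h2)]
  refine integral_congr_ae (Filter.Eventually.of_forall fun x => ?_)
  have : ‖cplx f x‖ = |f x| := by simp [cplx]
  dsimp only
  rw [this, _root_.sq_abs]

lemma sup_bound (h1 : ContDiff ℝ (⊤ : ℕ∞) f) (h2 : HasCompactSupport f) (x : Rd3) :
    |f x| ≤ ∫ ξ : Rd3, ‖𝓕 (cplx f) ξ‖ := by
  have inv := congrFun ((cplx_contDiff h1).continuous.fourierInv_fourier_eq
    (cplx_integrable h1 h2) (fourier_integrable h1 h2)) x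
  have : |f x| = ‖cplx f x‖ := by simp [cplx]
  rw [this, ← inv, Real.fourierInv_eq]
  refine le_trans (norm_integral_le_integral_norm _) ?_
  apply le_of_eq
  congr 1
  ext ξ
  rw [Circle.norm_smul]

lemma norm_fourier_pd (h1 : ContDiff ℝ (⊤ : ℕ∞) f) (h2 : HasCompactSupport f)
    (i : Fin 3) (ξ : Rd3) :
    ‖𝓕 (cplx (pd i f)) ξ‖ = 2 * π * |ξ i| * ‖𝓕 (cplx f) ξ‖ := by
  rw [fourier_pd h1 h2 i ξ]
  rw [norm_mul]
  congr 1
  simp only [norm_mul, Complex.norm_ofNat, Complex.norm_real, Complex.norm_I, mul_one,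
    Real.norm_eq_abs]
  rw [_root_.abs_of_nonneg Real.pi_nonneg]

lemma coord_abs_le_norm (ξ : Rd3) (i : Fin 3) : |ξ i| ≤ ‖ξ‖ := by
  rw [EuclideanSpace.norm_eq, ← Real.sqrt_sq_eq_abs]
  apply Real.sqrt_le_sqrt
  calc (ξ i) ^ 2 = ‖ξ i‖ ^ 2 := by rw [Real.norm_eq_abs, _root_.sq_abs]
  _ ≤ ∑ j : Fin 3, ‖ξ j‖ ^ 2 :=
      Finset.single_le_sum (fun j _ => sq_nonneg ‖ξ j‖) (Finset.mem_univ i)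

lemma norm_le_weight_half (ξ : Rd3) : ‖ξ‖ ≤ (1 + ‖ξ‖ ^ 2) ^ ((1:ℝ)/2) := by
  rw [← Real.sqrt_eq_rpow]
  calc ‖ξ‖ = Real.sqrt (‖ξ‖ ^ 2) := (Real.sqrt_sq (norm_nonneg ξ)).symm
  _ ≤ Real.sqrt (1 + ‖ξ‖ ^ 2) := Real.sqrt_le_sqrt (by nlinarith)

end Helpers

section VFHelpers

variable {u : VF}

lemma comp_cd (h1 : ContDiff ℝ (⊤ : ℕ∞) u) (j : Fin 3) :
    ContDiff ℝ (⊤ : ℕ∞) (fun x => u x j) := (contDiff_pi.mp h1) j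

lemma comp_hcs (h2 : HasCompactSupport u) (j : Fin 3) :
    HasCompactSupport (fun x => u x j) :=
  h2.comp_left (g := fun v : Fin 3 → ℝ => v j) rfl

lemma hsSq_eq_sum (s : ℝ) (h1 : ContDiff ℝ (⊤ : ℕ∞) u) (h2 : HasCompactSupport u) :
    hsSq s u = ∑ j : Fin 3,
      ∫ ξ : Rd3, (1 + ‖ξ‖ ^ 2) ^ s * ‖𝓕 (cplx (fun x => u x j)) ξ‖ ^ 2 := by
  unfold hsSq
  rw [← integral_finset_sum]
  · congr 1
    ext ξ
    rw [Finset.mul_sum]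
    rfl
  · intro j _
    exact fourier_weight_integrable (comp_cd h1 j) (comp_hcs h2 j) s 2 one_le_two

lemma comp_int_le_hsSq (s : ℝ) (h1 : ContDiff ℝ (⊤ : ℕ∞) u) (h2 : HasCompactSupport u)
    (j : Fin 3) :
    ∫ ξ : Rd3, (1 + ‖ξ‖ ^ 2) ^ s * ‖𝓕 (cplx (fun x => u x j)) ξ‖ ^ 2 ≤ hsSq s u := by
  rw [hsSq_eq_sum s h1 h2]
  refine Finset.single_le_sum (f := fun j => ∫ ξ : Rd3,
    (1 + ‖ξ‖ ^ 2) ^ s * ‖𝓕 (cplx (fun x => u x j)) ξ‖ ^ 2) ?_ (Finset.mem_univ j)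
  intro k _
  exact integral_nonneg fun ξ => by positivity

lemma hsSq_nonneg (s : ℝ) (u : VF) : 0 ≤ hsSq s u :=
  integral_nonneg fun ξ => by positivity

/-- `L²` bound for a single partial derivative of a component. -/
lemma pd_sq_int_le (h1 : ContDiff ℝ (⊤ : ℕ∞) u) (h2 : HasCompactSupport u) (i j : Fin 3) :
    ∫ x : Rd3, (pd i (fun y => u y j) x) ^ 2 ≤ 4 * π ^ 2 * hsSq 1 u := by
  have hcd := comp_cd h1 j
  have hhcs := comp_hcs h2 j
  rw [plancherel_sq (pd_contDiff hcd i) (pd_hcs hhcs i)]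
  have step1 : ∫ ξ : Rd3, ‖𝓕 (cplx (pd i (fun y => u y j))) ξ‖ ^ 2
      ≤ ∫ ξ : Rd3, 4 * π ^ 2 * ((1 + ‖ξ‖ ^ 2) ^ (1:ℝ) * ‖𝓕 (cplx (fun x => u x j)) ξ‖ ^ 2) := by
    apply integral_mono_of_nonneg
    · exact Filter.Eventually.of_forall fun ξ => by positivity
    · exact (fourier_weight_integrable hcd hhcs 1 2 one_le_two).const_mul _
    · refine Filter.Eventually.of_forall fun ξ => ?_
      dsimp only
      rw [norm_fourier_pd hcd hhcs i ξ, Real.rpow_one]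
      have h1' : |ξ i| ≤ ‖ξ‖ := coord_abs_le_norm ξ i
      have h2' : ‖ξ‖ ^ 2 ≤ 1 + ‖ξ‖ ^ 2 := by nlinarith
      have hn : (0:ℝ) ≤ ‖𝓕 (cplx (fun x => u x j)) ξ‖ := norm_nonneg _
      have habs : (0:ℝ) ≤ |ξ i| := abs_nonneg _
      nlinarith [sq_nonneg (|ξ i|), norm_nonneg ξ, Real.pi_pos,
        mul_le_mul_of_nonneg_right (mul_self_le_mul_self habs h1')
          (mul_self_nonneg ‖𝓕 (cplx (fun x => u x j)) ξ‖)]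
  calc ∫ ξ : Rd3, ‖𝓕 (cplx (pd i (fun y => u y j))) ξ‖ ^ 2 ≤ _ := step1
  _ = 4 * π ^ 2 * ∫ ξ : Rd3, (1 + ‖ξ‖ ^ 2) ^ (1:ℝ) * ‖𝓕 (cplx (fun x => u x j)) ξ‖ ^ 2 :=
      integral_const_mul _ _
  _ ≤ 4 * π ^ 2 * hsSq 1 u := by
      apply mul_le_mul_of_nonneg_left (comp_int_le_hsSq 1 h1 h2 j) (by positivity)

/-- sup bound for a single partial derivative of a component. -/
lemma pd_sup_le {m : ℝ} (hm : 5 / 2 < m) (h1 : ContDiff ℝ (⊤ : ℕ∞) u)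
    (h2 : HasCompactSupport u) (i j : Fin 3) (x : Rd3) :
    |pd i (fun y => u y j) x| ≤
      2 * π * Real.sqrt (∫ ξ : Rd3, (1 + ‖ξ‖ ^ 2) ^ (1 - m)) * Real.sqrt (hsSq m u) := by
  have hcd := comp_cd h1 j
  have hhcs := comp_hcs h2 j
  have hK : Integrable (fun ξ : Rd3 => (1 + ‖ξ‖ ^ 2) ^ (1 - m)) := by
    have h3 : (3:ℝ) < 2 * (m - 1) := by linarith
    have := integrable_rpow_neg_one_add_norm_sq (E := Rd3) (μ := volume) (r := 2 * (m - 1))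
      (by simpa [finrank_euclideanSpace] using h3)
    convert this using 2 with ξ
    ring_nf
  have step0 : |pd i (fun y => u y j) x| ≤ ∫ ξ : Rd3, ‖𝓕 (cplx (pd i (fun y => u y j))) ξ‖ :=
    sup_bound (pd_contDiff hcd i) (pd_hcs hhcs i) x
  have step1 : ∫ ξ : Rd3, ‖𝓕 (cplx (pd i (fun y => u y j))) ξ‖
      ≤ ∫ ξ : Rd3, 2 * π * ((1 + ‖ξ‖ ^ 2) ^ ((1:ℝ)/2) * ‖𝓕 (cplx (fun x => u x j)) ξ‖) := by
    apply integral_mono_of_nonneg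
    · exact Filter.Eventually.of_forall fun ξ => norm_nonneg _
    · have := (fourier_weight_integrable hcd hhcs ((1:ℝ)/2) 1 le_rfl).const_mul (2 * π)
      simpa [pow_one] using this
    · refine Filter.Eventually.of_forall fun ξ => ?_
      dsimp only
      rw [norm_fourier_pd hcd hhcs i ξ]
      have hh : |ξ i| ≤ (1 + ‖ξ‖ ^ 2) ^ ((1:ℝ)/2) :=
        le_trans (coord_abs_le_norm ξ i) (norm_le_weight_half ξ)
      have hn : (0:ℝ) ≤ ‖𝓕 (cplx (fun x => u x j)) ξ‖ := norm_nonneg _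
      have hmul := mul_le_mul_of_nonneg_right hh hn
      nlinarith [Real.pi_pos, hmul]
  -- Cauchy–Schwarz in Fourier space
  have hWm2 : Integrable (fun ξ : Rd3 =>
      ((1 + ‖ξ‖ ^ 2) ^ (m/2) * ‖𝓕 (cplx (fun x => u x j)) ξ‖) ^ 2) := by
    have := fourier_weight_integrable hcd hhcs m 2 one_le_two
    refine this.congr ?_
    refine Filter.Eventually.of_forall fun ξ => ?_
    dsimp only
    rw [mul_pow, weight_sq]
    ring_nf
  have hW1m : Integrable (fun ξ : Rd3 => ((1 + ‖ξ‖ ^ 2) ^ ((1 - m)/2)) ^ 2) := by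
    refine hK.congr ?_
    refine Filter.Eventually.of_forall fun ξ => ?_
    dsimp only
    rw [weight_sq]
    ring_nf
  have cs := csInt (f := fun ξ : Rd3 => (1 + ‖ξ‖ ^ 2) ^ ((1 - m)/2))
    (g := fun ξ : Rd3 => (1 + ‖ξ‖ ^ 2) ^ (m/2) * ‖𝓕 (cplx (fun x => u x j)) ξ‖)
    (fun ξ => by positivity) (fun ξ => by positivity)
    (weight_cont _).aestronglyMeasurable
    ((weight_cont _).mul (fourier_cont hcd hhcs).norm).aestronglyMeasurable
    hW1m hWm2
  have prod_eq : ∀ ξ : Rd3, (1 + ‖ξ‖ ^ 2) ^ ((1 - m)/2) *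
      ((1 + ‖ξ‖ ^ 2) ^ (m/2) * ‖𝓕 (cplx (fun x => u x j)) ξ‖)
      = (1 + ‖ξ‖ ^ 2) ^ ((1:ℝ)/2) * ‖𝓕 (cplx (fun x => u x j)) ξ‖ := by
    intro ξ
    rw [← mul_assoc, ← Real.rpow_add (by positivity)]
    ring_nf
  have sq1 : ∀ ξ : Rd3, ((1 + ‖ξ‖ ^ 2) ^ ((1 - m)/2)) ^ 2 = (1 + ‖ξ‖ ^ 2) ^ (1 - m) := by
    intro ξ; rw [weight_sq]; ring_nf
  have sq2 : ∀ ξ : Rd3, ((1 + ‖ξ‖ ^ 2) ^ (m/2) * ‖𝓕 (cplx (fun x => u x j)) ξ‖) ^ 2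
      = (1 + ‖ξ‖ ^ 2) ^ m * ‖𝓕 (cplx (fun x => u x j)) ξ‖ ^ 2 := by
    intro ξ; rw [mul_pow, weight_sq]; ring_nf
  simp only [prod_eq, sq1, sq2] at cs
  have last : Real.sqrt (∫ ξ : Rd3, (1 + ‖ξ‖ ^ 2) ^ m * ‖𝓕 (cplx (fun x => u x j)) ξ‖ ^ 2)
      ≤ Real.sqrt (hsSq m u) := Real.sqrt_le_sqrt (comp_int_le_hsSq m h1 h2 j)
  calc |pd i (fun y => u y j) x| ≤ _ := step0
  _ ≤ _ := step1
  _ = 2 * π * ∫ ξ : Rd3, (1 + ‖ξ‖ ^ 2) ^ ((1:ℝ)/2) * ‖𝓕 (cplx (fun x => u x j)) ξ‖ :=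
      integral_const_mul _ _
  _ ≤ 2 * π * (Real.sqrt (∫ ξ : Rd3, (1 + ‖ξ‖ ^ 2) ^ (1 - m)) *
        Real.sqrt (∫ ξ : Rd3, (1 + ‖ξ‖ ^ 2) ^ m * ‖𝓕 (cplx (fun x => u x j)) ξ‖ ^ 2)) := by
      apply mul_le_mul_of_nonneg_left _ (by positivity)
      exact cs
  _ ≤ 2 * π * Real.sqrt (∫ ξ : Rd3, (1 + ‖ξ‖ ^ 2) ^ (1 - m)) * Real.sqrt (hsSq m u) := by
      have h2 : Real.sqrt (∫ ξ : Rd3, (1 + ‖ξ‖ ^ 2) ^ (1 - m)) *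
          Real.sqrt (∫ ξ : Rd3, (1 + ‖ξ‖ ^ 2) ^ m * ‖𝓕 (cplx (fun x => u x j)) ξ‖ ^ 2)
          ≤ Real.sqrt (∫ ξ : Rd3, (1 + ‖ξ‖ ^ 2) ^ (1 - m)) * Real.sqrt (hsSq m u) :=
        mul_le_mul_of_nonneg_left last (Real.sqrt_nonneg _)
      calc 2 * π * (Real.sqrt (∫ ξ : Rd3, (1 + ‖ξ‖ ^ 2) ^ (1 - m)) *
          Real.sqrt (∫ ξ : Rd3, (1 + ‖ξ‖ ^ 2) ^ m * ‖𝓕 (cplx (fun x => u x j)) ξ‖ ^ 2))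
          ≤ 2 * π * (Real.sqrt (∫ ξ : Rd3, (1 + ‖ξ‖ ^ 2) ^ (1 - m)) * Real.sqrt (hsSq m u)) :=
            mul_le_mul_of_nonneg_left h2 (by positivity)
      _ = 2 * π * Real.sqrt (∫ ξ : Rd3, (1 + ‖ξ‖ ^ 2) ^ (1 - m)) * Real.sqrt (hsSq m u) := by
            ring

lemma dot_cross_bound (a b c : Fin 3 → ℝ) (K : ℝ) (hK : 0 ≤ K) (hc : ∀ k, |c k| ≤ K) :
    |dot3 (cross3 a b) c| ≤ 2 * K * ((∑ i : Fin 3, |a i|) * (∑ j : Fin 3, |b j|)) := by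
  have ha : ∀ i, 0 ≤ |a i| := fun i => abs_nonneg _
  have hb : ∀ i, 0 ≤ |b i| := fun i => abs_nonneg _
  simp only [dot3, cross3, Fin.sum_univ_three]
  simp only [Matrix.cons_val_zero, Matrix.cons_val_one, Matrix.head_cons,
    Matrix.cons_val_two, Matrix.tail_cons]
  have h0 := hc 0
  have h1 := hc 1
  have h2 := hc 2
  have e0 : |(a 1 * b 2 - a 2 * b 1) * c 0| ≤ (|a 1| * |b 2| + |a 2| * |b 1|) * K := by
    rw [abs_mul]
    apply mul_le_mul _ h0 (abs_nonneg _) (by positivity)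
    calc |a 1 * b 2 - a 2 * b 1| ≤ |a 1 * b 2| + |a 2 * b 1| := abs_sub _ _
    _ = |a 1| * |b 2| + |a 2| * |b 1| := by rw [abs_mul, abs_mul]
  have e1 : |(a 2 * b 0 - a 0 * b 2) * c 1| ≤ (|a 2| * |b 0| + |a 0| * |b 2|) * K := by
    rw [abs_mul]
    apply mul_le_mul _ h1 (abs_nonneg _) (by positivity)
    calc |a 2 * b 0 - a 0 * b 2| ≤ |a 2 * b 0| + |a 0 * b 2| := abs_sub _ _
    _ = |a 2| * |b 0| + |a 0| * |b 2| := by rw [abs_mul, abs_mul]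
  have e2 : |(a 0 * b 1 - a 1 * b 0) * c 2| ≤ (|a 0| * |b 1| + |a 1| * |b 0|) * K := by
    rw [abs_mul]
    apply mul_le_mul _ h2 (abs_nonneg _) (by positivity)
    calc |a 0 * b 1 - a 1 * b 0| ≤ |a 0 * b 1| + |a 1 * b 0| := abs_sub _ _
    _ = |a 0| * |b 1| + |a 1| * |b 0| := by rw [abs_mul, abs_mul]
  calc |(a 1 * b 2 - a 2 * b 1) * c 0 + (a 2 * b 0 - a 0 * b 2) * c 1 +
        (a 0 * b 1 - a 1 * b 0) * c 2|
      ≤ |(a 1 * b 2 - a 2 * b 1) * c 0 + (a 2 * b 0 - a 0 * b 2) * c 1| +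
        |(a 0 * b 1 - a 1 * b 0) * c 2| := abs_add_le _ _
  _ ≤ |(a 1 * b 2 - a 2 * b 1) * c 0| + |(a 2 * b 0 - a 0 * b 2) * c 1| +
        |(a 0 * b 1 - a 1 * b 0) * c 2| := by
      have := abs_add_le ((a 1 * b 2 - a 2 * b 1) * c 0) ((a 2 * b 0 - a 0 * b 2) * c 1)
      linarith
  _ ≤ (|a 1| * |b 2| + |a 2| * |b 1|) * K + (|a 2| * |b 0| + |a 0| * |b 2|) * K +
        (|a 0| * |b 1| + |a 1| * |b 0|) * K := by linarith
  _ ≤ 2 * K * ((|a 0| + |a 1| + |a 2|) * (|b 0| + |b 1| + |b 2|)) := by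
      nlinarith [ha 0, ha 1, ha 2, hb 0, hb 1, hb 2,
        mul_nonneg (ha 0) (hb 0), mul_nonneg (ha 1) (hb 1), mul_nonneg (ha 2) (hb 2),
        mul_nonneg (ha 0) (hb 1), mul_nonneg (ha 1) (hb 0), mul_nonneg (ha 0) (hb 2),
        mul_nonneg (ha 2) (hb 0), mul_nonneg (ha 1) (hb 2), mul_nonneg (ha 2) (hb 1)]

lemma curl_comp_cont (h1 : ContDiff ℝ (⊤ : ℕ∞) u) (k : Fin 3) :
    Continuous (fun x => curl3 u x k) := by
  have hc : ∀ i j : Fin 3, Continuous (fun x => pd i (fun y => u y j) x) := fun i j =>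
    (pd_contDiff (comp_cd h1 j) i).continuous
  fin_cases k <;> simp only [curl3, Matrix.cons_val_zero, Matrix.cons_val_one,
    Matrix.head_cons, Matrix.cons_val_two, Matrix.tail_cons] <;>
    exact Continuous.sub (hc _ _) (hc _ _)

lemma hcs_sub {f g : Rd3 → ℝ} (hf : HasCompactSupport f) (hg : HasCompactSupport g) :
    HasCompactSupport (fun x => f x - g x) := by
  have hneg : HasCompactSupport (fun x => -(g x)) :=
    hg.comp_left (g := fun r : ℝ => -r) (by simp)
  have := hf.add hneg
  have e : (fun x => f x - g x) = f + fun x => -(g x) := by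
    funext x; simp [sub_eq_add_neg]
  rw [e]; exact this

lemma curl_comp_hcs (h2 : HasCompactSupport u) (k : Fin 3) :
    HasCompactSupport (fun x => curl3 u x k) := by
  have hh : ∀ i j : Fin 3, HasCompactSupport (fun x => pd i (fun y => u y j) x) := fun i j =>
    pd_hcs (comp_hcs h2 j) i
  fin_cases k <;> simp only [curl3, Matrix.cons_val_zero, Matrix.cons_val_one,
    Matrix.head_cons, Matrix.cons_val_two, Matrix.tail_cons] <;>
    exact hcs_sub (hh _ _) (hh _ _)

end VFHelpers

set_option maxHeartbeats 2000000 in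
/-- Bound for the extended Hall operator on the product spaces:
‖H̃(φ,ψ)‖_{V_{s,m}'} ≤ c‖φ‖_𝓗‖ψ‖_𝓥 for φ = (u¹,B¹) ∈ 𝓗 = H × H,
ψ = (u²,B²) ∈ 𝓥 = V × V and test elements (v¹,v²) ∈ V_s × V_m, where
⟨H̃(φ,ψ),(v¹,v²)⟩ = h(B¹,B²,v²); stated on the dense class of smooth compactly
supported divergence-free fields, with Fourier–Sobolev norms. -/
theorem hallOperator_product_bound (s m : ℝ) (hs : 0 ≤ s) (hm : 5 / 2 < m) :
    ∃ c : ℝ, 0 < c ∧ ∀ u1 B1 u2 B2 v1 v2 : VF,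
      (ContDiff ℝ (⊤ : ℕ∞) u1 ∧ HasCompactSupport u1 ∧ divFree u1) →
      (ContDiff ℝ (⊤ : ℕ∞) B1 ∧ HasCompactSupport B1 ∧ divFree B1) →
      (ContDiff ℝ (⊤ : ℕ∞) u2 ∧ HasCompactSupport u2 ∧ divFree u2) →
      (ContDiff ℝ (⊤ : ℕ∞) B2 ∧ HasCompactSupport B2 ∧ divFree B2) →
      (ContDiff ℝ (⊤ : ℕ∞) v1 ∧ HasCompactSupport v1 ∧ divFree v1) →
      (ContDiff ℝ (⊤ : ℕ∞) v2 ∧ HasCompactSupport v2 ∧ divFree v2) →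
      |hallForm B1 B2 v2| ≤
        c * Real.sqrt (hsSq 0 u1 + hsSq 0 B1) * Real.sqrt (hsSq 1 u2 + hsSq 1 B2) *
          Real.sqrt (hsSq s v1 + hsSq m v2) := by
  classical
  set Km : ℝ := Real.sqrt (∫ ξ : Rd3, (1 + ‖ξ‖ ^ 2) ^ (1 - m)) with hKm
  have hKm0 : 0 ≤ Km := Real.sqrt_nonneg _
  refine ⟨240 * π ^ 2 * (Km + 1) + 1, by positivity, ?_⟩
  rintro u1 B1 u2 B2 v1 v2 - ⟨hB1cd, hB1cs, -⟩ - ⟨hB2cd, hB2cs, -⟩ - ⟨hv2cd, hv2cs, -⟩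
  set A : Rd3 → ℝ := fun x => ∑ i : Fin 3, |B1 x i| with hA
  set Bf : Rd3 → ℝ := fun x => ∑ j : Fin 3, |curl3 B2 x j| with hBf
  set Kv : ℝ := 4 * π * Km * Real.sqrt (hsSq m v2) with hKv
  have hKv0 : 0 ≤ Kv := by positivity
  -- sup bound on the curl of v2
  have curl_v2_bound : ∀ (x : Rd3) (k : Fin 3), |curl3 v2 x k| ≤ Kv := by
    intro x k
    have hpd : ∀ i j : Fin 3, |pd i (fun y => v2 y j) x| ≤
        2 * π * Km * Real.sqrt (hsSq m v2) := fun i j => pd_sup_le hm hv2cd hv2cs i j x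
    have habs : ∀ i1 j1 i2 j2 : Fin 3,
        |pd i1 (fun y => v2 y j1) x - pd i2 (fun y => v2 y j2) x| ≤ Kv := by
      intro i1 j1 i2 j2
      calc |pd i1 (fun y => v2 y j1) x - pd i2 (fun y => v2 y j2) x|
          ≤ |pd i1 (fun y => v2 y j1) x| + |pd i2 (fun y => v2 y j2) x| := abs_sub _ _
      _ ≤ 2 * π * Km * Real.sqrt (hsSq m v2) + 2 * π * Km * Real.sqrt (hsSq m v2) :=
          add_le_add (hpd _ _) (hpd _ _)
      _ = Kv := by rw [hKv]; ring
    fin_cases k <;>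
      simp only [curl3] <;> exact habs _ _ _ _
  -- continuity / support facts
  have hAcont : Continuous A := by
    apply continuous_finset_sum
    intro i _
    exact ((comp_cd hB1cd i).continuous).abs
  have hAhcs : HasCompactSupport A :=
    hB1cs.comp_left (g := fun v : Fin 3 → ℝ => ∑ i : Fin 3, |v i|) (by simp)
  have hBfcont : Continuous Bf := by
    apply continuous_finset_sum
    intro k _
    exact (curl_comp_cont hB2cd k).abs
  have hBfhcs : HasCompactSupport Bf := by
    have h3 : ∀ k : Fin 3, HasCompactSupport (fun x => |curl3 B2 x k|) := fun k =>
      (curl_comp_hcs hB2cs k).comp_left (g := fun r : ℝ => |r|) (_root_.abs_zero)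
    have : Bf = (fun x => |curl3 B2 x 0|) + ((fun x => |curl3 B2 x 1|)
        + (fun x => |curl3 B2 x 2|)) := by
      funext x
      simp [hBf, Fin.sum_univ_three]
      ring
    rw [this]
    exact (h3 0).add ((h3 1).add (h3 2))
  have hABint : Integrable (fun x : Rd3 => A x * Bf x) :=
    (hAcont.mul hBfcont).integrable_of_hasCompactSupport (hAhcs.mul_right)
  have hA2int : Integrable (fun x : Rd3 => A x ^ 2) :=
    (hAcont.pow 2).integrable_of_hasCompactSupport
      (by simpa [Function.comp_def, Pi.pow_def] using
        hAhcs.comp_left (g := fun r : ℝ => r ^ 2) (by simp))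
  have hBf2int : Integrable (fun x : Rd3 => Bf x ^ 2) :=
    (hBfcont.pow 2).integrable_of_hasCompactSupport
      (by simpa [Function.comp_def, Pi.pow_def] using
        hBfhcs.comp_left (g := fun r : ℝ => r ^ 2) (by simp))
  -- step 1 : the hall form is bounded via the pointwise product
  have key1 : |hallForm B1 B2 v2| ≤ 2 * Kv * ∫ x : Rd3, A x * Bf x := by
    rw [hallForm, abs_neg, ← Real.norm_eq_abs]
    have hb : ∀ x : Rd3, ‖dot3 (cross3 (B1 x) (curl3 B2 x)) (curl3 v2 x)‖
        ≤ 2 * Kv * (A x * Bf x) := by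
      intro x
      rw [Real.norm_eq_abs]
      exact dot_cross_bound (B1 x) (curl3 B2 x) (curl3 v2 x) Kv hKv0 (curl_v2_bound x)
    calc ‖∫ x : Rd3, dot3 (cross3 (B1 x) (curl3 B2 x)) (curl3 v2 x)‖
        ≤ ∫ x : Rd3, 2 * Kv * (A x * Bf x) :=
          norm_integral_le_of_norm_le (hABint.const_mul _) (Filter.Eventually.of_forall hb)
    _ = 2 * Kv * ∫ x : Rd3, A x * Bf x := integral_const_mul _ _
  -- step 2 : Cauchy–Schwarz in physical space
  have key2 : ∫ x : Rd3, A x * Bf x ≤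
      Real.sqrt (∫ x : Rd3, A x ^ 2) * Real.sqrt (∫ x : Rd3, Bf x ^ 2) :=
    csInt (fun x => Finset.sum_nonneg fun i _ => abs_nonneg _)
      (fun x => Finset.sum_nonneg fun i _ => abs_nonneg _)
      hAcont.aestronglyMeasurable hBfcont.aestronglyMeasurable hA2int hBf2int
  -- step 3 : L² bound for A
  have hB1sqint : ∀ j : Fin 3, Integrable (fun x : Rd3 => (B1 x j) ^ 2) := fun j =>
    ((comp_cd hB1cd j).continuous.pow 2).integrable_of_hasCompactSupport
      (by simpa [Function.comp_def, Pi.pow_def] using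
        (comp_hcs hB1cs j).comp_left (g := fun r : ℝ => r ^ 2) (by simp))
  have key3 : ∫ x : Rd3, A x ^ 2 ≤ 4 * hsSq 0 B1 := by
    have p1 : ∫ x : Rd3, A x ^ 2 ≤ ∫ x : Rd3, 4 * ∑ j : Fin 3, (B1 x j) ^ 2 := by
      apply integral_mono hA2int ((integrable_finset_sum _ fun j _ => hB1sqint j).const_mul 4)
      intro x
      dsimp only
      simp only [hA, Fin.sum_univ_three]
      nlinarith [_root_.sq_abs (B1 x 0), _root_.sq_abs (B1 x 1), _root_.sq_abs (B1 x 2),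
        sq_nonneg (|B1 x 0| - |B1 x 1|), sq_nonneg (|B1 x 1| - |B1 x 2|),
        sq_nonneg (|B1 x 0| - |B1 x 2|), sq_nonneg (B1 x 0), sq_nonneg (B1 x 1),
        sq_nonneg (B1 x 2)]
    have p2 : ∫ x : Rd3, 4 * ∑ j : Fin 3, (B1 x j) ^ 2
        = 4 * ∑ j : Fin 3, ∫ x : Rd3, (B1 x j) ^ 2 := by
      rw [integral_const_mul, integral_finset_sum _ fun j _ => hB1sqint j]
    have p3 : ∑ j : Fin 3, ∫ x : Rd3, (B1 x j) ^ 2 = hsSq 0 B1 := by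
      rw [hsSq_eq_sum 0 hB1cd hB1cs]
      refine Finset.sum_congr rfl fun j _ => ?_
      rw [plancherel_sq (comp_cd hB1cd j) (comp_hcs hB1cs j)]
      refine integral_congr_ae (Filter.Eventually.of_forall fun ξ => ?_)
      dsimp only
      rw [Real.rpow_zero, one_mul]
    calc ∫ x : Rd3, A x ^ 2 ≤ _ := p1
    _ = 4 * ∑ j : Fin 3, ∫ x : Rd3, (B1 x j) ^ 2 := p2
    _ = 4 * hsSq 0 B1 := by rw [p3]
  -- step 4 : L² bound for Bf
  have hpdint : ∀ i j : Fin 3, Integrable (fun x : Rd3 => (pd i (fun y => B2 y j) x) ^ 2) := by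
    intro i j
    exact ((pd_contDiff (comp_cd hB2cd j) i).continuous.pow 2).integrable_of_hasCompactSupport
      (by simpa [Function.comp_def, Pi.pow_def] using
        (pd_hcs (comp_hcs hB2cs j) i).comp_left (g := fun r : ℝ => r ^ 2) (by simp))
  have key4 : ∫ x : Rd3, Bf x ^ 2 ≤ 225 * π ^ 2 * hsSq 1 B2 := by
    have p1 : ∫ x : Rd3, Bf x ^ 2 ≤
        ∫ x : Rd3, 6 * ∑ i : Fin 3, ∑ j : Fin 3, (pd i (fun y => B2 y j) x) ^ 2 := by
      apply integral_mono hBf2int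
        ((integrable_finset_sum _ fun i _ => integrable_finset_sum _ fun j _ =>
          hpdint i j).const_mul 6)
      intro x
      dsimp only
      have hc0 : (curl3 B2 x 0) ^ 2 ≤ 2 * (pd 1 (fun y => B2 y 2) x) ^ 2
          + 2 * (pd 2 (fun y => B2 y 1) x) ^ 2 := by
        simp only [curl3, Matrix.cons_val_zero]
        nlinarith [sq_nonneg (pd 1 (fun y => B2 y 2) x + pd 2 (fun y => B2 y 1) x)]
      have hc1 : (curl3 B2 x 1) ^ 2 ≤ 2 * (pd 2 (fun y => B2 y 0) x) ^ 2
          + 2 * (pd 0 (fun y => B2 y 2) x) ^ 2 := by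
        simp only [curl3, Matrix.cons_val_one, Matrix.head_cons, Matrix.cons_val_zero]
        nlinarith [sq_nonneg (pd 2 (fun y => B2 y 0) x + pd 0 (fun y => B2 y 2) x)]
      have hc2 : (curl3 B2 x 2) ^ 2 ≤ 2 * (pd 0 (fun y => B2 y 1) x) ^ 2
          + 2 * (pd 1 (fun y => B2 y 0) x) ^ 2 := by
        simp only [curl3, Matrix.cons_val_two, Matrix.tail_cons, Matrix.head_cons,
          Matrix.cons_val_one]
        nlinarith [sq_nonneg (pd 0 (fun y => B2 y 1) x + pd 1 (fun y => B2 y 0) x)]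
      have hBfsq : Bf x ^ 2 ≤ 3 * ((curl3 B2 x 0) ^ 2 + (curl3 B2 x 1) ^ 2
          + (curl3 B2 x 2) ^ 2) := by
        simp only [hBf, Fin.sum_univ_three]
        nlinarith [_root_.sq_abs (curl3 B2 x 0), _root_.sq_abs (curl3 B2 x 1), _root_.sq_abs (curl3 B2 x 2),
          sq_nonneg (|curl3 B2 x 0| - |curl3 B2 x 1|),
          sq_nonneg (|curl3 B2 x 1| - |curl3 B2 x 2|),
          sq_nonneg (|curl3 B2 x 0| - |curl3 B2 x 2|)]
      have hsum : ∑ i : Fin 3, ∑ j : Fin 3, (pd i (fun y => B2 y j) x) ^ 2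
          = (pd 0 (fun y => B2 y 0) x) ^ 2 + (pd 0 (fun y => B2 y 1) x) ^ 2
          + (pd 0 (fun y => B2 y 2) x) ^ 2 + (pd 1 (fun y => B2 y 0) x) ^ 2
          + (pd 1 (fun y => B2 y 1) x) ^ 2 + (pd 1 (fun y => B2 y 2) x) ^ 2
          + (pd 2 (fun y => B2 y 0) x) ^ 2 + (pd 2 (fun y => B2 y 1) x) ^ 2
          + (pd 2 (fun y => B2 y 2) x) ^ 2 := by
        simp [Fin.sum_univ_three]
        ring
      rw [hsum]
      nlinarith [sq_nonneg (pd 0 (fun y => B2 y 0) x), sq_nonneg (pd 1 (fun y => B2 y 1) x),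
        sq_nonneg (pd 2 (fun y => B2 y 2) x), sq_nonneg (pd 0 (fun y => B2 y 1) x),
        sq_nonneg (pd 0 (fun y => B2 y 2) x), sq_nonneg (pd 1 (fun y => B2 y 0) x),
        sq_nonneg (pd 1 (fun y => B2 y 2) x), sq_nonneg (pd 2 (fun y => B2 y 0) x),
        sq_nonneg (pd 2 (fun y => B2 y 1) x)]
    have p2 : ∫ x : Rd3, 6 * ∑ i : Fin 3, ∑ j : Fin 3, (pd i (fun y => B2 y j) x) ^ 2
        = 6 * ∑ i : Fin 3, ∑ j : Fin 3, ∫ x : Rd3, (pd i (fun y => B2 y j) x) ^ 2 := by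
      rw [integral_const_mul]
      congr 1
      rw [integral_finset_sum _ fun i _ => integrable_finset_sum _ fun j _ => hpdint i j]
      exact Finset.sum_congr rfl fun i _ =>
        integral_finset_sum _ fun j _ => hpdint i j
    have p3 : ∑ i : Fin 3, ∑ j : Fin 3, ∫ x : Rd3, (pd i (fun y => B2 y j) x) ^ 2
        ≤ ∑ i : Fin 3, ∑ j : Fin 3, 4 * π ^ 2 * hsSq 1 B2 := by
      refine Finset.sum_le_sum fun i _ => Finset.sum_le_sum fun j _ => ?_
      exact pd_sq_int_le hB2cd hB2cs i j
    have hsnn : 0 ≤ hsSq 1 B2 := hsSq_nonneg 1 B2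
    calc ∫ x : Rd3, Bf x ^ 2 ≤ _ := p1
    _ = 6 * ∑ i : Fin 3, ∑ j : Fin 3, ∫ x : Rd3, (pd i (fun y => B2 y j) x) ^ 2 := p2
    _ ≤ 6 * ∑ i : Fin 3, ∑ j : Fin 3, 4 * π ^ 2 * hsSq 1 B2 := by linarith [p3]
    _ = 216 * π ^ 2 * hsSq 1 B2 := by
        simp [Fin.sum_univ_three]
        ring
    _ ≤ 225 * π ^ 2 * hsSq 1 B2 := by nlinarith [Real.pi_pos]
  -- assemble
  have hint_AB_nn : 0 ≤ ∫ x : Rd3, A x ^ 2 := integral_nonneg fun x => sq_nonneg _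
  have hint_Bf_nn : 0 ≤ ∫ x : Rd3, Bf x ^ 2 := integral_nonneg fun x => sq_nonneg _
  have sqrt3 : Real.sqrt (∫ x : Rd3, A x ^ 2) ≤ 2 * Real.sqrt (hsSq 0 B1) := by
    calc Real.sqrt (∫ x : Rd3, A x ^ 2) ≤ Real.sqrt (4 * hsSq 0 B1) := Real.sqrt_le_sqrt key3
    _ = 2 * Real.sqrt (hsSq 0 B1) := by
        rw [show (4 : ℝ) * hsSq 0 B1 = (2:ℝ)^2 * hsSq 0 B1 by norm_num,
          Real.sqrt_mul (by positivity), Real.sqrt_sq (by norm_num : (0:ℝ) ≤ 2)]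
  have sqrt4 : Real.sqrt (∫ x : Rd3, Bf x ^ 2) ≤ 15 * π * Real.sqrt (hsSq 1 B2) := by
    calc Real.sqrt (∫ x : Rd3, Bf x ^ 2) ≤ Real.sqrt (225 * π ^ 2 * hsSq 1 B2) :=
        Real.sqrt_le_sqrt key4
    _ = 15 * π * Real.sqrt (hsSq 1 B2) := by
        rw [show (225 : ℝ) * π ^ 2 * hsSq 1 B2 = (15 * π)^2 * hsSq 1 B2 by ring,
          Real.sqrt_mul (by positivity), Real.sqrt_sq (by positivity)]
  have hS0 : Real.sqrt (hsSq 0 B1) ≤ Real.sqrt (hsSq 0 u1 + hsSq 0 B1) :=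
    Real.sqrt_le_sqrt (by linarith [hsSq_nonneg 0 u1])
  have hS1 : Real.sqrt (hsSq 1 B2) ≤ Real.sqrt (hsSq 1 u2 + hsSq 1 B2) :=
    Real.sqrt_le_sqrt (by linarith [hsSq_nonneg 1 u2])
  have hSm : Real.sqrt (hsSq m v2) ≤ Real.sqrt (hsSq s v1 + hsSq m v2) :=
    Real.sqrt_le_sqrt (by linarith [hsSq_nonneg s v1])
  have chain : |hallForm B1 B2 v2| ≤
      2 * Kv * (2 * Real.sqrt (hsSq 0 B1)) * (15 * π * Real.sqrt (hsSq 1 B2)) := by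
    calc |hallForm B1 B2 v2| ≤ 2 * Kv * ∫ x : Rd3, A x * Bf x := key1
    _ ≤ 2 * Kv * (Real.sqrt (∫ x : Rd3, A x ^ 2) * Real.sqrt (∫ x : Rd3, Bf x ^ 2)) :=
        mul_le_mul_of_nonneg_left key2 (by positivity)
    _ ≤ 2 * Kv * ((2 * Real.sqrt (hsSq 0 B1)) * (15 * π * Real.sqrt (hsSq 1 B2))) := by
        apply mul_le_mul_of_nonneg_left _ (by positivity)
        apply mul_le_mul sqrt3 sqrt4 (Real.sqrt_nonneg _) (by positivity)
    _ = 2 * Kv * (2 * Real.sqrt (hsSq 0 B1)) * (15 * π * Real.sqrt (hsSq 1 B2)) := by ring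
  have expand : 2 * Kv * (2 * Real.sqrt (hsSq 0 B1)) * (15 * π * Real.sqrt (hsSq 1 B2))
      = 240 * π ^ 2 * Km * (Real.sqrt (hsSq 0 B1) * Real.sqrt (hsSq 1 B2)
        * Real.sqrt (hsSq m v2)) := by
    rw [hKv]; ring
  calc |hallForm B1 B2 v2| ≤ _ := chain
  _ = 240 * π ^ 2 * Km * (Real.sqrt (hsSq 0 B1) * Real.sqrt (hsSq 1 B2)
        * Real.sqrt (hsSq m v2)) := expand
  _ ≤ (240 * π ^ 2 * (Km + 1) + 1) * (Real.sqrt (hsSq 0 u1 + hsSq 0 B1)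
        * Real.sqrt (hsSq 1 u2 + hsSq 1 B2) * Real.sqrt (hsSq s v1 + hsSq m v2)) := by
      apply mul_le_mul
      · nlinarith [Real.pi_pos]
      · have h1 := mul_le_mul hS0 hS1 (Real.sqrt_nonneg _) (Real.sqrt_nonneg _)
        have h2 := mul_le_mul h1 hSm (Real.sqrt_nonneg _)
          (mul_nonneg (Real.sqrt_nonneg _) (Real.sqrt_nonneg _))
        exact h2
      · positivity
      · positivity
  _ = (240 * π ^ 2 * (Km + 1) + 1) * Real.sqrt (hsSq 0 u1 + hsSq 0 B1)
        * Real.sqrt (hsSq 1 u2 + hsSq 1 B2) * Real.sqrt (hsSq s v1 + hsSq m v2) := by ring
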